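/- For the family of graphs G^x indexed by x ∈ {0,1}^{n/2}, the k-cycle count C_k(G^x) depends only on |x| (the Hamming weight of x), and for any x, x' with |x| ≥ |x'|, C_k(G^x) − C_k(G^{x'}) ≥ (|x| − |x'|)·𝖢_1, where 𝖢_1 is the number of k-cycles in G^x that use exactly one edge of the form {v_{2i−1}, v_{2i}} (a quantity independent of x as long as that edge is present). -/

import Mathlib

/-- The graph `G^x` on `n = 2m` vertices (vertex `(i, b)` stands for `v_{2i+1}` or
`v_{2i+2}`): every pair of distinct vertices is an edge, except the pairs
`{(i, false), (i, true)}`, which are edges iff `x_i = 1`. -/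
def Gx (m : ℕ) (x : Fin m → Bool) : SimpleGraph (Fin m × Bool) where
  Adj a b := a ≠ b ∧ (a.1 = b.1 → x a.1 = true)
  symm := by
    constructor
    rintro a b ⟨h1, h2⟩
    refine ⟨h1.symm, fun h => ?_⟩
    rw [h]
    exact h2 h.symm
  loopless := by constructor; intro a h; exact h.1 rfl

/-- The number of `k`-cycle subgraphs of `G^x` that pass through the special edge
`{(i, false), (i, true)}` and avoid every other special edge. -/
noncomputable def cyclesThrough (m k : ℕ) (x : Fin m → Bool) (i : Fin m) : ℕ :=
  Nat.card {H : (Gx m x).Subgraph //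
    Nonempty (H.coe ≃g SimpleGraph.cycleGraph k) ∧ H.Adj (i, false) (i, true) ∧
      ∀ j, j ≠ i → ¬H.Adj (j, false) (j, true)}

/-- The number of `k`-cycle subgraphs of a graph `G`. -/
noncomputable def cycleCount (k : ℕ) {V : Type*} (G : SimpleGraph V) : ℕ :=
  Nat.card {H : G.Subgraph // Nonempty (H.coe ≃g SimpleGraph.cycleGraph k)}

/-- The Hamming weight `|x|` of `x ∈ {0,1}^m`. -/
def hw {m : ℕ} (x : Fin m → Bool) : ℕ := (Finset.univ.filter fun i => x i = true).card

open SimpleGraph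

namespace Stmt14Aux

instance fsub {V : Type*} [Finite V] (G : SimpleGraph V) : Finite G.Subgraph :=
  Finite.of_injective (fun H => (H.verts, H.Adj)) (by
    intro H1 H2 h
    simp only [Prod.mk.injEq] at h
    exact SimpleGraph.Subgraph.ext h.1 h.2)

/-- Transfer a subgraph to another ambient graph containing its edges. -/
def transfer {V : Type*} {G G' : SimpleGraph V} (H : G.Subgraph)
    (h : ∀ ⦃a b⦄, H.Adj a b → G'.Adj a b) : G'.Subgraph where
  verts := H.verts
  Adj := H.Adj
  adj_sub := fun hab => h hab
  edge_vert := H.edge_vert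
  symm := H.symm

lemma transfer_coe {V : Type*} {G G' : SimpleGraph V} (H : G.Subgraph)
    (h : ∀ ⦃a b⦄, H.Adj a b → G'.Adj a b) : (transfer H h).coe = H.coe := rfl

@[simp] lemma transfer_adj {V : Type*} {G G' : SimpleGraph V} (H : G.Subgraph)
    (h : ∀ ⦃a b⦄, H.Adj a b → G'.Adj a b) (a b : V) :
    (transfer H h).Adj a b ↔ H.Adj a b := Iff.rfl

lemma transfer_inj {V : Type*} {G G' : SimpleGraph V} (H1 H2 : G.Subgraph)
    (h1 : ∀ ⦃a b⦄, H1.Adj a b → G'.Adj a b) (h2 : ∀ ⦃a b⦄, H2.Adj a b → G'.Adj a b)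
    (h : transfer H1 h1 = transfer H2 h2) : H1 = H2 := by
  have hv : (transfer H1 h1).verts = (transfer H2 h2).verts := congrArg _ h
  have ha : (transfer H1 h1).Adj = (transfer H2 h2).Adj := congrArg _ h
  exact SimpleGraph.Subgraph.ext hv ha

/-- Push a subgraph along a graph isomorphism. -/
def pmap {V V' : Type*} {G : SimpleGraph V} {G' : SimpleGraph V'} (e : G ≃g G')
    (H : G.Subgraph) : G'.Subgraph where
  verts := (e : V → V') '' H.verts
  Adj a b := H.Adj (e.symm a) (e.symm b)
  adj_sub := fun {a b} hab => by
    have := e.toHom.map_adj (H.adj_sub hab)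
    simpa using this
  edge_vert := fun {a b} hab => ⟨e.symm a, H.edge_vert hab, by simp⟩
  symm := ⟨fun a b hab => H.adj_symm hab⟩

@[simp] lemma pmap_adj {V V' : Type*} {G : SimpleGraph V} {G' : SimpleGraph V'} (e : G ≃g G')
    (H : G.Subgraph) (a b : V') : (pmap e H).Adj a b ↔ H.Adj (e.symm a) (e.symm b) := Iff.rfl

lemma pmap_pmap {V V' : Type*} {G : SimpleGraph V} {G' : SimpleGraph V'} (e : G ≃g G')
    (H : G.Subgraph) : pmap e.symm (pmap e H) = H := by
  ext a b
  · simp [pmap]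
  · simp [pmap]

def pmapIso {V V' : Type*} {G : SimpleGraph V} {G' : SimpleGraph V'} (e : G ≃g G')
    (H : G.Subgraph) : H.coe ≃g (pmap e H).coe where
  toEquiv := Equiv.image e.toEquiv H.verts
  map_rel_iff' := by
    intro a b
    simp [pmap, Subgraph.coe, Equiv.image]
    show H.Adj (e.symm (e a.1)) (e.symm (e b.1)) ↔ _
    simp

/-- Isomorphic graphs have equal cycle counts. -/
noncomputable def cycEquiv {V V' : Type*} {G : SimpleGraph V} {G' : SimpleGraph V'}
    (e : G ≃g G') (k : ℕ) :
    {H : G.Subgraph // Nonempty (H.coe ≃g SimpleGraph.cycleGraph k)} ≃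
      {H : G'.Subgraph // Nonempty (H.coe ≃g SimpleGraph.cycleGraph k)} where
  toFun H := ⟨pmap e H.1, H.2.map fun f => ((pmapIso e H.1).symm.trans f)⟩
  invFun H := ⟨pmap e.symm H.1, H.2.map fun f => ((pmapIso e.symm H.1).symm.trans f)⟩
  left_inv H := Subtype.ext (pmap_pmap e H.1)
  right_inv H := by
    refine Subtype.ext ?_
    have := pmap_pmap e.symm H.1
    simpa using this

lemma cycleCount_iso {V V' : Type*} {G : SimpleGraph V} {G' : SimpleGraph V'}
    (e : G ≃g G') (k : ℕ) : cycleCount k G = cycleCount k G' :=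
  Nat.card_congr (cycEquiv e k)

lemma gx_adj {m : ℕ} (x : Fin m → Bool) (a b : Fin m × Bool) :
    (Gx m x).Adj a b ↔ a ≠ b ∧ (a.1 = b.1 → x a.1 = true) := Iff.rfl

def gxIso {m : ℕ} (x x' : Fin m → Bool) (σ : Equiv.Perm (Fin m))
    (h : ∀ j, x' j = x (σ j)) : Gx m x' ≃g Gx m x where
  toEquiv := Equiv.prodCongr σ (Equiv.refl Bool)
  map_rel_iff' := by
    rintro ⟨a1, a2⟩ ⟨b1, b2⟩
    simp only [Equiv.prodCongr_apply, Equiv.coe_refl, Prod.map_apply, id_eq, gx_adj]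
    constructor
    · rintro ⟨h1, h2⟩
      refine ⟨fun hc => h1 (by rw [Prod.ext_iff] at hc ⊢; exact ⟨congrArg σ hc.1, hc.2⟩), ?_⟩
      intro hab
      rw [h]
      exact h2 (congrArg σ hab)
    · rintro ⟨h1, h2⟩
      refine ⟨fun hc => ?_, fun hc => ?_⟩
      · rw [Prod.ext_iff] at hc
        exact h1 (by rw [Prod.ext_iff]; exact ⟨σ.injective hc.1, hc.2⟩)
      · rw [← h]
        exact h2 (σ.injective hc)

lemma exists_perm {m : ℕ} (x x' : Fin m → Bool) (h : hw x = hw x') :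
    ∃ σ : Equiv.Perm (Fin m), ∀ j, x' j = x (σ j) := by
  classical
  set s := Finset.univ.filter (fun i => x i = true) with hs
  set t := Finset.univ.filter (fun i => x' i = true) with ht
  have h' : s.card = t.card := h
  have hcard : Fintype.card {j // j ∈ t} = Fintype.card {j // j ∈ s} := by
    simp only [Fintype.card_coe]
    exact h'.symm
  have hcardc : Fintype.card {j // j ∉ t} = Fintype.card {j // j ∉ s} := by
    rw [Fintype.card_subtype_compl, Fintype.card_subtype_compl]
    simp only [Fintype.card_coe]
    rw [h']
  let e1 : {j // j ∈ t} ≃ {j // j ∈ s} := Fintype.equivOfCardEq hcard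
  let e2 : {j // j ∉ t} ≃ {j // j ∉ s} := Fintype.equivOfCardEq hcardc
  refine ⟨Equiv.subtypeCongr e1 e2, fun j => ?_⟩
  by_cases hj : j ∈ t
  · have h1 : x' j = true := (Finset.mem_filter.mp hj).2
    have h2 : Equiv.subtypeCongr e1 e2 j = (e1 ⟨j, hj⟩ : Fin m) := by
      simp [Equiv.subtypeCongr, hj]
    rw [h1, h2, (Finset.mem_filter.mp (e1 ⟨j, hj⟩).2).2]
  · have h1 : x' j = false := by
      have : ¬ x' j = true := fun hc => hj (Finset.mem_filter.mpr ⟨Finset.mem_univ _, hc⟩)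
      exact Bool.not_eq_true _ |>.mp this
    have h2 : Equiv.subtypeCongr e1 e2 j = (e2 ⟨j, hj⟩ : Fin m) := by
      simp [Equiv.subtypeCongr, hj]
    have h3 : x ((e2 ⟨j, hj⟩ : Fin m)) = false := by
      have hm := (e2 ⟨j, hj⟩).2
      have : ¬ x (e2 ⟨j, hj⟩ : Fin m) = true := fun hc =>
        hm (Finset.mem_filter.mpr ⟨Finset.mem_univ _, hc⟩)
      exact Bool.not_eq_true _ |>.mp this
    rw [h1, h2, h3]

/-- Part 1. -/
lemma part1 {m : ℕ} (k : ℕ) (x x' : Fin m → Bool) (h : hw x = hw x') :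
    cycleCount k (Gx m x) = cycleCount k (Gx m x') := by
  obtain ⟨σ, hσ⟩ := exists_perm x x' h
  exact (cycleCount_iso (gxIso x x' σ hσ) k).symm

/-- cyclesThrough transported along a permutation. -/
lemma cyclesThrough_perm {m : ℕ} (k : ℕ) (x x' : Fin m → Bool) (σ : Equiv.Perm (Fin m))
    (h : ∀ j, x' j = x (σ j)) (i : Fin m) :
    cyclesThrough m k x' i = cyclesThrough m k x (σ i) := by
  classical
  set e := gxIso x x' σ h with he
  have he2 : ∀ p : Fin m × Bool, e.symm p = (σ.symm p.1, p.2) := fun p => rfl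
  have he3 : ∀ p : Fin m × Bool, e.symm.symm p = (σ p.1, p.2) := fun p => rfl
  refine Nat.card_congr
    { toFun := fun H => ⟨pmap e H.1,
        H.2.1.map fun f => ((pmapIso e H.1).symm.trans f), ?_, ?_⟩
      invFun := fun K => ⟨pmap e.symm K.1,
        K.2.1.map fun f => ((pmapIso e.symm K.1).symm.trans f), ?_, ?_⟩
      left_inv := fun H => Subtype.ext (pmap_pmap e H.1)
      right_inv := fun K => Subtype.ext (by
        have := pmap_pmap e.symm K.1
        simpa using this) }
  · show H.1.Adj (e.symm (σ i, false)) (e.symm (σ i, true))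
    rw [he2, he2]
    simpa using H.2.2.1
  · intro p hp hadj
    rw [pmap_adj, he2, he2] at hadj
    exact H.2.2.2 (σ.symm p) (fun hc => hp (by rw [← hc]; simp)) hadj
  · show K.1.Adj (e.symm.symm (i, false)) (e.symm.symm (i, true))
    rw [he3, he3]
    exact K.2.2.1
  · intro p hp hadj
    rw [pmap_adj, he3, he3] at hadj
    exact K.2.2.2 (σ p) (fun hc => hp (σ.injective hc)) hadj

lemma pair_adj {m : ℕ} {x : Fin m → Bool} (H : (Gx m x).Subgraph) {a b : Fin m × Bool}
    (hab : H.Adj a b) (h1 : a.1 = b.1) : H.Adj (a.1, false) (a.1, true) := by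
  have hne : a ≠ b := (H.adj_sub hab).1
  obtain ⟨p, c⟩ := a
  obtain ⟨q, d⟩ := b
  simp only at h1
  subst h1
  cases c <;> cases d
  · exact absurd rfl hne
  · exact hab
  · exact H.adj_symm hab
  · exact absurd rfl hne

lemma gx_mono {m : ℕ} {y x : Fin m → Bool} (h : ∀ j, y j = true → x j = true) :
    Gx m y ≤ Gx m x := by
  rintro a b ⟨h1, h2⟩
  exact ⟨h1, fun hc => h (a.1) (h2 hc)⟩

/-- Delta reduction: `cyclesThrough` doesn't depend on the rest of `x`. -/
lemma cyclesThrough_delta {m : ℕ} (k : ℕ) (x : Fin m → Bool) (i : Fin m) (hi : x i = true) :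
    cyclesThrough m k x i = cyclesThrough m k (fun j => decide (j = i)) i := by
  classical
  set δ : Fin m → Bool := fun j => decide (j = i) with hδ
  have hδx : ∀ j, δ j = true → x j = true := by
    intro j hj
    rw [hδ] at hj
    simp only [decide_eq_true_eq] at hj
    rw [hj]; exact hi
  refine Nat.card_congr ?_
  refine
    { toFun := fun H => ?_
      invFun := fun H => ?_
      left_inv := fun H => ?_
      right_inv := fun H => ?_ }
  · refine ⟨transfer H.1 (fun a b hab => ?_), ?_⟩
    · have hGx := H.1.adj_sub hab
      refine ⟨hGx.1, fun hc => ?_⟩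
      rw [hδ]
      simp only [decide_eq_true_eq]
      by_contra hne
      exact H.2.2.2 a.1 hne (pair_adj H.1 hab hc)
    · exact ⟨H.2.1.map fun f => f, H.2.2.1, H.2.2.2⟩
  · exact ⟨transfer H.1 (fun a b hab => gx_mono hδx (H.1.adj_sub hab)),
      ⟨H.2.1.map fun f => f, H.2.2.1, H.2.2.2⟩⟩
  · exact Subtype.ext (SimpleGraph.Subgraph.ext rfl rfl)
  · exact Subtype.ext (SimpleGraph.Subgraph.ext rfl rfl)

/-- Part 2. -/
lemma part2 {m : ℕ} (k : ℕ) (x x' : Fin m → Bool) (i i' : Fin m)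
    (hi : x i = true) (hi' : x' i' = true) :
    cyclesThrough m k x i = cyclesThrough m k x' i' := by
  classical
  rw [cyclesThrough_delta k x i hi, cyclesThrough_delta k x' i' hi']
  have h : ∀ j, (fun j => decide (j = i)) j =
      (fun j => decide (j = i')) (Equiv.swap i i' j) := by
    intro j
    simp only [decide_eq_decide]
    constructor
    · intro hc
      rw [hc]
      exact Equiv.swap_apply_left i i'
    · intro hc
      have := (Equiv.swap i i').injective (a₁ := j) (a₂ := i)
      apply this
      rw [hc, Equiv.swap_apply_left]
  have := cyclesThrough_perm k (fun j => decide (j = i')) (fun j => decide (j = i))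
    (Equiv.swap i i') h i
  rw [this, Equiv.swap_apply_left]

/-- The single-flip step. -/
lemma step {m : ℕ} (k : ℕ) (x : Fin m → Bool) (j : Fin m) (hj : x j = true) :
    cycleCount k (Gx m (Function.update x j false)) + cyclesThrough m k x j ≤
      cycleCount k (Gx m x) := by
  classical
  have hyx : ∀ p, Function.update x j false p = true → x p = true := by
    intro p hp
    rcases eq_or_ne p j with rfl | hne
    · simp at hp
    · rwa [Function.update_of_ne hne] at hp
  have hle := gx_mono hyx
  unfold cycleCount cyclesThrough
  rw [← Nat.card_sum]
  refine Nat.card_le_card_of_injective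
    (Sum.elim
      (fun H => (⟨transfer H.1 (fun a b hab => hle (H.1.adj_sub hab)),
        H.2.map fun f => f⟩ :
          {H : (Gx m x).Subgraph // Nonempty (H.coe ≃g SimpleGraph.cycleGraph k)}))
      (fun H => ⟨H.1, H.2.1⟩)) ?_
  have hedge : ∀ (H : {H : (Gx m (Function.update x j false)).Subgraph //
      Nonempty (H.coe ≃g SimpleGraph.cycleGraph k)}),
      ¬ (transfer H.1 (fun a b hab => hle (H.1.adj_sub hab))).Adj (j, false) (j, true) := by
    intro H hadj
    rw [transfer_adj] at hadj
    have := (H.1.adj_sub hadj).2 rfl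
    simp at this
  rintro (H1 | H1) (H2 | H2) hH
  · have hval := congrArg Subtype.val hH
    simp only [Sum.elim_inl] at hval
    exact congrArg Sum.inl (Subtype.ext (transfer_inj _ _ _ _ hval))
  · exfalso
    have hval := congrArg Subtype.val hH
    simp only [Sum.elim_inl, Sum.elim_inr] at hval
    exact hedge H1 (by rw [hval]; exact H2.2.2.1)
  · exfalso
    have hval := congrArg Subtype.val hH
    simp only [Sum.elim_inl, Sum.elim_inr] at hval
    exact hedge H2 (by rw [← hval]; exact H1.2.2.1)
  · have hval := congrArg Subtype.val hH
    simp only [Sum.elim_inr] at hval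
    exact congrArg Sum.inr (Subtype.ext hval)

/-- The summed inequality along a chain of bit flips. -/
lemma main_le {m : ℕ} (k : ℕ) (x x' : Fin m → Bool)
    (hle : ∀ p, x' p = true → x p = true) :
    cycleCount k (Gx m x') +
      ∑ p ∈ ((Finset.univ.filter fun i => x i = true) \
        (Finset.univ.filter fun i => x' i = true)), cyclesThrough m k x p ≤
      cycleCount k (Gx m x) := by
  classical
  generalize hd : ((Finset.univ.filter fun i => x i = true) \
    (Finset.univ.filter fun i => x' i = true)).card = d
  induction d generalizing x with
  | zero =>
    have hempty : ((Finset.univ.filter fun i => x i = true) \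
        (Finset.univ.filter fun i => x' i = true)) = ∅ := Finset.card_eq_zero.mp hd
    have hxx' : x = x' := by
      funext p
      rcases hp : x p with _ | _
      · rcases hp' : x' p with _ | _
        · rfl
        · exact absurd (hle p hp') (by simp [hp])
      · rcases hp' : x' p with _ | _
        · exfalso
          have : p ∈ ((Finset.univ.filter fun i => x i = true) \
              (Finset.univ.filter fun i => x' i = true)) := by
            simp [Finset.mem_sdiff, hp, hp']
          rw [hempty] at this
          simp at this
        · rfl
    subst hxx'
    rw [hempty]
    simp
  | succ d ih =>
    have hne : ((Finset.univ.filter fun i => x i = true) \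
        (Finset.univ.filter fun i => x' i = true)).Nonempty := by
      rw [← Finset.card_pos, hd]; omega
    obtain ⟨j, hjmem⟩ := hne
    have hjx : x j = true := (Finset.mem_filter.mp (Finset.mem_sdiff.mp hjmem).1).2
    have hjx' : x' j ≠ true := fun hc =>
      (Finset.mem_sdiff.mp hjmem).2 (Finset.mem_filter.mpr ⟨Finset.mem_univ _, hc⟩)
    set y := Function.update x j false with hy
    have hley : ∀ p, x' p = true → y p = true := by
      intro p hp
      have hpj : p ≠ j := fun hc => hjx' (hc ▸ hp)
      rw [hy, Function.update_of_ne hpj]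
      exact hle p hp
    have hdiffy : ((Finset.univ.filter fun i => y i = true) \
        (Finset.univ.filter fun i => x' i = true)) =
        (((Finset.univ.filter fun i => x i = true) \
          (Finset.univ.filter fun i => x' i = true))).erase j := by
      ext p
      simp only [Finset.mem_sdiff, Finset.mem_filter, Finset.mem_univ, true_and,
        Finset.mem_erase]
      constructor
      · rintro ⟨hp1, hp2⟩
        have hpj : p ≠ j := by
          intro hc
          rw [hy, hc, Function.update_self] at hp1
          exact absurd hp1 (by simp)
        rw [hy, Function.update_of_ne hpj] at hp1
        exact ⟨hpj, hp1, hp2⟩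
      · rintro ⟨hpj, hp1, hp2⟩
        rw [hy, Function.update_of_ne hpj]
        exact ⟨hp1, hp2⟩
    have hcardy : ((Finset.univ.filter fun i => y i = true) \
        (Finset.univ.filter fun i => x' i = true)).card = d := by
      rw [hdiffy, Finset.card_erase_of_mem hjmem, hd]
      omega
    have hih := ih y hley hcardy
    have hsumeq : ∑ p ∈ ((Finset.univ.filter fun i => y i = true) \
        (Finset.univ.filter fun i => x' i = true)), cyclesThrough m k y p =
        ∑ p ∈ ((Finset.univ.filter fun i => y i = true) \
          (Finset.univ.filter fun i => x' i = true)), cyclesThrough m k x p := by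
      refine Finset.sum_congr rfl fun p hp => ?_
      have hpy : y p = true :=
        (Finset.mem_filter.mp (Finset.mem_sdiff.mp hp).1).2
      have hpj : p ≠ j := by
        intro hc
        rw [hc, hy, Function.update_self] at hpy
        exact absurd hpy (by simp)
      have hpx : x p = true := by
        rw [hy, Function.update_of_ne hpj] at hpy
        exact hpy
      exact part2 k y x p p (by rw [hy, Function.update_of_ne hpj]; exact hpx) hpx
    have hstep := step k x j hjx
    rw [← hy] at hstep
    rw [hdiffy] at hsumeq hih
    rw [← Finset.add_sum_erase _ _ hjmem, ← hsumeq]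
    linarith [hih, hstep]
  
end Stmt14Aux

theorem stmt14 (m k : ℕ) (hk : 3 ≤ k) :
    (∀ x x' : Fin m → Bool, hw x = hw x' →
        cycleCount k (Gx m x) = cycleCount k (Gx m x')) ∧
    (∀ (x x' : Fin m → Bool) (i i' : Fin m), x i = true → x' i' = true →
        cyclesThrough m k x i = cyclesThrough m k x' i') ∧
    (∀ (x x' : Fin m → Bool) (i : Fin m), x i = true → hw x' ≤ hw x →
        cycleCount k (Gx m x') + (hw x - hw x') * cyclesThrough m k x i ≤
          cycleCount k (Gx m x)) := by
  classical
  refine ⟨fun x x' h => Stmt14Aux.part1 k x x' h,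
    fun x x' i i' hi hi' => Stmt14Aux.part2 k x x' i i' hi hi', ?_⟩
  intro x x' i hi hcard
  obtain ⟨t, hts, htcard⟩ := Finset.exists_subset_card_eq
    (s := Finset.univ.filter fun p => x p = true) (n := hw x') hcard
  set x'' : Fin m → Bool := fun p => decide (p ∈ t) with hx''
  have hfilt : (Finset.univ.filter fun p => x'' p = true) = t := by
    ext p
    simp [hx'']
  have hwx'' : hw x'' = hw x' := by
    rw [hw, hfilt, htcard]
  have hle'' : ∀ p, x'' p = true → x p = true := by
    intro p hp
    rw [hx''] at hp
    simp only [decide_eq_true_eq] at hp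
    exact (Finset.mem_filter.mp (hts hp)).2
  have hmain := Stmt14Aux.main_le k x x'' hle''
  rw [hfilt] at hmain
  have hcount : cycleCount k (Gx m x') = cycleCount k (Gx m x'') :=
    Stmt14Aux.part1 k x' x'' (by rw [hwx''])
  have hsum : ∑ p ∈ ((Finset.univ.filter fun p => x p = true) \ t),
      cyclesThrough m k x p = (hw x - hw x') * cyclesThrough m k x i := by
    rw [Finset.sum_congr rfl (fun p hp => ?_), Finset.sum_const, smul_eq_mul]
    · congr 1
      rw [Finset.card_sdiff_of_subset hts, htcard]
      rfl
    · exact Stmt14Aux.part2 k x x p i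
        ((Finset.mem_filter.mp (Finset.mem_sdiff.mp hp).1).2) hi
  rw [hsum] at hmain
  rw [hcount]
  exact hmain
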